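/- Assume 0 ≤ h_d < 1 and suppose σ > 0 satisfies vᵀE(B + h_p⟨B⟩)RBᵀv ≥ σ|v|₂² for all v ∈ ℝ^N. Let d : [0,∞) → ℝ^N be measurable with ∫₀^∞ |d(s)|₂² ds < ∞ and let (p, Δ) : [0,∞) → ℝ^N × ℝ^N be differentiable and satisfy ṗ(t) = −(B + h_p⟨B⟩)RBᵀ(M⁻¹p(t) − v₀𝟙) + (B + h_d⟨B⟩)AΔ(t) + d(t), Δ̇(t) = −Bᵀ(M⁻¹p(t) − v₀𝟙) for all t ≥ 0. Then for every t ≥ 0, H_Δ(p(t), Δ(t)) ≤ H_Δ(p(0), Δ(0)) + (1/(2σ)) ∫₀^∞ |d(s)|₂² ds. -/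

import Mathlib

open Matrix MeasureTheory Real

/-- The N×N matrix with 1 on the diagonal and -1 on the first superdiagonal. -/
noncomputable def Bmat (N : ℕ) : Matrix (Fin N) (Fin N) ℝ :=
  Matrix.of fun i j => if j = i then 1 else if (j : ℕ) = (i : ℕ) + 1 then -1 else 0

/-- Entrywise absolute value of `Bmat N`. -/
noncomputable def absB (N : ℕ) : Matrix (Fin N) (Fin N) ℝ :=
  Matrix.of fun i j => |Bmat N i j|

/-- Euclidean norm of a vector in ℝ^N. -/
noncomputable def norm2 {N : ℕ} (x : Fin N → ℝ) : ℝ := Real.sqrt (x ⬝ᵥ x)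

/-- The Hamiltonian H(p, Δ) = ½(p − v₀M𝟙)ᵀ M⁻¹ (p − v₀M𝟙) + ½ Δᵀ A Δ. -/
noncomputable def Ham {N : ℕ} (v0 : ℝ) (m a : Fin N → ℝ) (p Δ : Fin N → ℝ) : ℝ :=
  (1/2) * ((p - v0 • (Matrix.diagonal m *ᵥ fun _ => 1)) ⬝ᵥ
      (Matrix.diagonal (fun i => (m i)⁻¹) *ᵥ (p - v0 • (Matrix.diagonal m *ᵥ fun _ => 1)))) +
  (1/2) * (Δ ⬝ᵥ (Matrix.diagonal a *ᵥ Δ))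

/-- The scaled Hamiltonian H_Δ(p, Δ) = ½(p − v₀M𝟙)ᵀ E M⁻¹ (p − v₀M𝟙) + ½(1+h_d) Δᵀ E A Δ,
where E = diag(1, q, …, q^{N−1}) with q = (1−h_d)/(1+h_d). -/
noncomputable def HamD {N : ℕ} (hd v0 : ℝ) (m a : Fin N → ℝ) (p Δ : Fin N → ℝ) : ℝ :=
  (1/2) * ((p - v0 • (Matrix.diagonal m *ᵥ fun _ => 1)) ⬝ᵥ
      ((Matrix.diagonal (fun i : Fin N => ((1 - hd) / (1 + hd)) ^ (i : ℕ)) *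
        Matrix.diagonal (fun i => (m i)⁻¹)) *ᵥ
          (p - v0 • (Matrix.diagonal m *ᵥ fun _ => 1)))) +
  (1/2) * (1 + hd) * (Δ ⬝ᵥ ((Matrix.diagonal (fun i : Fin N => ((1 - hd) / (1 + hd)) ^ (i : ℕ)) *
      Matrix.diagonal a) *ᵥ Δ))

lemma hasDerivAt_dot {N : ℕ} {f g : ℝ → Fin N → ℝ} {f' g' : Fin N → ℝ} {t : ℝ}
    (hf : HasDerivAt f f' t) (hg : HasDerivAt g g' t) :
    HasDerivAt (fun s => f s ⬝ᵥ g s) (f' ⬝ᵥ g t + f t ⬝ᵥ g') t := by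
  have h : ∀ i ∈ Finset.univ, HasDerivAt (fun s => f s i * g s i)
      (f' i * g t i + f t i * g' i) t :=
    fun i _ => (hasDerivAt_pi.1 hf i).mul (hasDerivAt_pi.1 hg i)
  simpa [dotProduct, Finset.sum_add_distrib] using HasDerivAt.fun_sum h

lemma hasDerivAt_mulVecf {N : ℕ} (S : Matrix (Fin N) (Fin N) ℝ) {f : ℝ → Fin N → ℝ}
    {f' : Fin N → ℝ} {t : ℝ} (hf : HasDerivAt f f' t) :
    HasDerivAt (fun s => S *ᵥ f s) (S *ᵥ f') t := by
  rw [hasDerivAt_pi]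
  intro i
  have h : ∀ j ∈ Finset.univ, HasDerivAt (fun s => S i j * f s j) (S i j * f' j) t :=
    fun j _ => HasDerivAt.const_mul (S i j) (hasDerivAt_pi.1 hf j)
  simpa [mulVec, dotProduct] using HasDerivAt.fun_sum h

lemma dot_diag_symm {N : ℕ} (v x y : Fin N → ℝ) :
    x ⬝ᵥ (Matrix.diagonal v *ᵥ y) = y ⬝ᵥ (Matrix.diagonal v *ᵥ x) := by
  simp only [dotProduct, mulVec_diagonal]
  exact Finset.sum_congr rfl fun i _ => by ring

lemma E_mul_Bd {N : ℕ} (hd : ℝ) (hhd0 : 0 ≤ hd) :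
    Matrix.diagonal (fun i : Fin N => ((1 - hd) / (1 + hd)) ^ (i : ℕ)) * (Bmat N + hd • absB N)
      = (1 + hd) • (Bmat N * Matrix.diagonal (fun i : Fin N => ((1 - hd) / (1 + hd)) ^ (i : ℕ))) := by
  have h1 : (1 : ℝ) + hd ≠ 0 := by positivity
  ext i j
  rw [Matrix.diagonal_mul, Matrix.smul_apply, Matrix.mul_diagonal]
  simp only [Matrix.add_apply, Matrix.smul_apply, smul_eq_mul]
  by_cases hji : j = i
  · subst hji
    simp [Bmat, absB]
    ring
  · by_cases hsucc : (j : ℕ) = (i : ℕ) + 1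
    · simp only [Bmat, absB, Matrix.of_apply, hji, if_false, hsucc, if_true, abs_neg, abs_one]
      rw [pow_succ]
      field_simp
      ring
    · simp [Bmat, absB, hji, hsucc]

lemma hasDerivAt_HamD {N : ℕ} (hd v0 : ℝ) (m a : Fin N → ℝ)
    {p Δ : ℝ → Fin N → ℝ} {p' Δ' : Fin N → ℝ} {t : ℝ}
    (hp : HasDerivAt p p' t) (hΔ : HasDerivAt Δ Δ' t) :
    HasDerivAt (fun s => HamD hd v0 m a (p s) (Δ s))
      ((p t - v0 • (Matrix.diagonal m *ᵥ fun _ => 1)) ⬝ᵥ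
         ((Matrix.diagonal (fun i : Fin N => ((1 - hd) / (1 + hd)) ^ (i : ℕ)) *
           Matrix.diagonal (fun i => (m i)⁻¹)) *ᵥ p')
       + (1 + hd) * (Δ t ⬝ᵥ ((Matrix.diagonal (fun i : Fin N => ((1 - hd) / (1 + hd)) ^ (i : ℕ)) *
           Matrix.diagonal a) *ᵥ Δ'))) t := by
  set e : Fin N → ℝ := fun i : Fin N => ((1 - hd) / (1 + hd)) ^ (i : ℕ) with he
  set c : Fin N → ℝ := v0 • (Matrix.diagonal m *ᵥ fun _ => 1) with hc
  have hw : HasDerivAt (fun s => p s - c) p' t := hp.sub_const c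
  have h1 : HasDerivAt (fun s => (p s - c) ⬝ᵥ
      ((Matrix.diagonal e * Matrix.diagonal (fun i => (m i)⁻¹)) *ᵥ (p s - c)))
      (p' ⬝ᵥ ((Matrix.diagonal e * Matrix.diagonal (fun i => (m i)⁻¹)) *ᵥ (p t - c))
        + (p t - c) ⬝ᵥ ((Matrix.diagonal e * Matrix.diagonal (fun i => (m i)⁻¹)) *ᵥ p')) t :=
    hasDerivAt_dot hw (hasDerivAt_mulVecf _ hw)
  have h2 : HasDerivAt (fun s => Δ s ⬝ᵥ ((Matrix.diagonal e * Matrix.diagonal a) *ᵥ Δ s))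
      (Δ' ⬝ᵥ ((Matrix.diagonal e * Matrix.diagonal a) *ᵥ Δ t)
        + Δ t ⬝ᵥ ((Matrix.diagonal e * Matrix.diagonal a) *ᵥ Δ')) t :=
    hasDerivAt_dot hΔ (hasDerivAt_mulVecf _ hΔ)
  have hs1 : p' ⬝ᵥ ((Matrix.diagonal e * Matrix.diagonal (fun i => (m i)⁻¹)) *ᵥ (p t - c))
      = (p t - c) ⬝ᵥ ((Matrix.diagonal e * Matrix.diagonal (fun i => (m i)⁻¹)) *ᵥ p') := by
    rw [Matrix.diagonal_mul_diagonal, dot_diag_symm]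
  have hs2 : Δ' ⬝ᵥ ((Matrix.diagonal e * Matrix.diagonal a) *ᵥ Δ t)
      = Δ t ⬝ᵥ ((Matrix.diagonal e * Matrix.diagonal a) *ᵥ Δ') := by
    rw [Matrix.diagonal_mul_diagonal, dot_diag_symm]
  have h := (HasDerivAt.const_mul ((1:ℝ)/2) h1).fun_add
    (HasDerivAt.const_mul ((1:ℝ)/2 * (1 + hd)) h2)
  have hfun : (fun s => (1/2) * ((p s - c) ⬝ᵥ
        ((Matrix.diagonal e * Matrix.diagonal (fun i => (m i)⁻¹)) *ᵥ (p s - c)))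
      + (1/2) * (1 + hd) * (Δ s ⬝ᵥ ((Matrix.diagonal e * Matrix.diagonal a) *ᵥ Δ s)))
      = fun s => HamD hd v0 m a (p s) (Δ s) := by
    funext s; simp only [HamD, he, hc, mul_assoc]
  rw [hfun] at h
  refine h.congr_deriv ?_
  rw [hs1, hs2]
  ring

lemma key_bound {N : ℕ} (hd hp : ℝ) (hhd0 : 0 ≤ hd) (hhd1 : hd < 1) (v0 σ : ℝ) (hσ : 0 < σ)
    (r a m : Fin N → ℝ) (hm : ∀ i, 0 < m i)
    (hσmin : ∀ v : Fin N → ℝ,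
      σ * (v ⬝ᵥ v) ≤ v ⬝ᵥ ((Matrix.diagonal (fun i : Fin N => ((1 - hd) / (1 + hd)) ^ (i : ℕ)) *
        ((Bmat N + hp • absB N) * Matrix.diagonal r * (Bmat N)ᵀ)) *ᵥ v))
    (P Dv dv : Fin N → ℝ) :
    (P - v0 • (Matrix.diagonal m *ᵥ fun _ => 1)) ⬝ᵥ
      ((Matrix.diagonal (fun i : Fin N => ((1 - hd) / (1 + hd)) ^ (i : ℕ)) *
        Matrix.diagonal (fun i => (m i)⁻¹)) *ᵥ
        (-(((Bmat N + hp • absB N) * Matrix.diagonal r * (Bmat N)ᵀ) *ᵥ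
            (Matrix.diagonal (fun i => (m i)⁻¹) *ᵥ P - v0 • (fun _ : Fin N => (1:ℝ))))
          + ((Bmat N + hd • absB N) * Matrix.diagonal a) *ᵥ Dv + dv))
    + (1 + hd) * (Dv ⬝ᵥ ((Matrix.diagonal (fun i : Fin N => ((1 - hd) / (1 + hd)) ^ (i : ℕ)) *
        Matrix.diagonal a) *ᵥ
        (-((Bmat N)ᵀ *ᵥ (Matrix.diagonal (fun i => (m i)⁻¹) *ᵥ P - v0 • (fun _ : Fin N => (1:ℝ)))))))
    ≤ (1 / (2 * σ)) * (dv ⬝ᵥ dv) := by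
  set q : ℝ := (1 - hd) / (1 + hd) with hq
  set e : Fin N → ℝ := fun i : Fin N => q ^ (i : ℕ) with he
  set E : Matrix (Fin N) (Fin N) ℝ := Matrix.diagonal e with hE
  set K : Matrix (Fin N) (Fin N) ℝ :=
    (Bmat N + hp • absB N) * Matrix.diagonal r * (Bmat N)ᵀ with hK
  set z : Fin N → ℝ :=
    Matrix.diagonal (fun i => (m i)⁻¹) *ᵥ P - v0 • (fun _ : Fin N => (1:ℝ)) with hz
  -- bounds on e
  have hq0 : 0 ≤ q := by
    apply div_nonneg <;> linarith
  have hq1 : q ≤ 1 := by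
    rw [hq, div_le_one (by linarith)]; linarith
  have he0 : ∀ i, 0 ≤ e i := fun i => pow_nonneg hq0 _
  have he1 : ∀ i, e i ≤ 1 := fun i => pow_le_one₀ hq0 hq1
  -- step 1: move M⁻¹ from left factor
  have step1 : ∀ x : Fin N → ℝ,
      (P - v0 • (Matrix.diagonal m *ᵥ fun _ => 1)) ⬝ᵥ
        ((E * Matrix.diagonal (fun i => (m i)⁻¹)) *ᵥ x) = z ⬝ᵥ (E *ᵥ x) := by
    intro x
    rw [Matrix.diagonal_mul_diagonal]
    simp only [dotProduct, mulVec_diagonal, hE, hz, Pi.sub_apply, Pi.smul_apply, smul_eq_mul]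
    refine Finset.sum_congr rfl fun i _ => ?_
    have hmi := (hm i).ne'
    have hinv : m i * (m i)⁻¹ = 1 := mul_inv_cancel₀ hmi
    simp only [Pi.mul_apply, mul_one]
    linear_combination (-(v0 * e i * x i)) * hinv
  rw [step1]
  -- expand linearity
  have hexp : z ⬝ᵥ (E *ᵥ (-(K *ᵥ z) + ((Bmat N + hd • absB N) * Matrix.diagonal a) *ᵥ Dv + dv))
      = -(z ⬝ᵥ ((E * K) *ᵥ z))
        + z ⬝ᵥ ((E * ((Bmat N + hd • absB N) * Matrix.diagonal a)) *ᵥ Dv)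
        + z ⬝ᵥ (E *ᵥ dv) := by
    rw [mulVec_add, mulVec_add, mulVec_neg, dotProduct_add, dotProduct_add, dotProduct_neg,
      Matrix.mulVec_mulVec, Matrix.mulVec_mulVec]
  rw [hexp]
  -- cross-term cancellation
  have hcross : z ⬝ᵥ ((E * ((Bmat N + hd • absB N) * Matrix.diagonal a)) *ᵥ Dv)
      + (1 + hd) * (Dv ⬝ᵥ ((E * Matrix.diagonal a) *ᵥ (-((Bmat N)ᵀ *ᵥ z)))) = 0 := by
    have hEBd : E * ((Bmat N + hd • absB N) * Matrix.diagonal a)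
        = (1 + hd) • (Bmat N * (E * Matrix.diagonal a)) := by
      rw [← Matrix.mul_assoc, E_mul_Bd hd hhd0, Matrix.smul_mul, Matrix.mul_assoc]
    rw [hEBd, smul_mulVec, dotProduct_smul, smul_eq_mul]
    have h1 : z ⬝ᵥ ((Bmat N * (E * Matrix.diagonal a)) *ᵥ Dv)
        = ((Bmat N)ᵀ *ᵥ z) ⬝ᵥ ((E * Matrix.diagonal a) *ᵥ Dv) := by
      rw [← Matrix.mulVec_mulVec, Matrix.dotProduct_mulVec, ← Matrix.mulVec_transpose]
    have h2 : Dv ⬝ᵥ ((E * Matrix.diagonal a) *ᵥ (-((Bmat N)ᵀ *ᵥ z)))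
        = -(((Bmat N)ᵀ *ᵥ z) ⬝ᵥ ((E * Matrix.diagonal a) *ᵥ Dv)) := by
      rw [mulVec_neg, dotProduct_neg, Matrix.diagonal_mul_diagonal, dot_diag_symm]
    rw [h1, h2]
    ring
  -- disturbance term bound
  have hdist : z ⬝ᵥ (E *ᵥ dv) ≤ σ * (z ⬝ᵥ z) + (1 / (4 * σ)) * (dv ⬝ᵥ dv) := by
    have hi : ∀ i ∈ Finset.univ, z i * (E *ᵥ dv) i
        ≤ σ * (z i * z i) + (1 / (4 * σ)) * (dv i * dv i) := by
      intro i _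
      rw [hE, mulVec_diagonal]
      have hcpos : 0 < 1 / (4 * σ) := by positivity
      have hzd : z i * dv i ≤ σ * (z i * z i) + (1 / (4 * σ)) * (dv i * dv i) := by
        have key : 0 ≤ 4 * σ ^ 2 * (z i * z i) + dv i * dv i - 4 * σ * (z i * dv i) := by
          nlinarith [sq_nonneg (2 * σ * z i - dv i)]
        have h3 : (1 / (4 * σ)) * (4 * σ ^ 2 * (z i * z i) + dv i * dv i - 4 * σ * (z i * dv i))
            = σ * (z i * z i) + (1 / (4 * σ)) * (dv i * dv i) - z i * dv i := by
          field_simp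
        have h4 := mul_nonneg hcpos.le key
        rw [h3] at h4
        linarith
      have hpos : 0 ≤ σ * (z i * z i) + (1 / (4 * σ)) * (dv i * dv i) := by
        have := mul_nonneg hσ.le (mul_self_nonneg (z i))
        have := mul_nonneg hcpos.le (mul_self_nonneg (dv i))
        linarith
      have hb : z i * (e i * dv i) ≤ e i * (σ * (z i * z i) + (1 / (4 * σ)) * (dv i * dv i)) := by
        have h5 := mul_le_mul_of_nonneg_left hzd (he0 i)
        calc z i * (e i * dv i) = e i * (z i * dv i) := by ring
        _ ≤ _ := h5
      have hc : e i * (σ * (z i * z i) + (1 / (4 * σ)) * (dv i * dv i))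
          ≤ σ * (z i * z i) + (1 / (4 * σ)) * (dv i * dv i) := by
        nlinarith [mul_nonneg (sub_nonneg.2 (he1 i)) hpos]
      linarith
    have := Finset.sum_le_sum hi
    simpa [dotProduct, Finset.sum_add_distrib, Finset.mul_sum] using this
  -- combine
  have hmin := hσmin z
  have hdd : 0 ≤ dv ⬝ᵥ dv := Finset.sum_nonneg fun i _ => mul_self_nonneg _
  have hquarter : (1 / (4 * σ)) * (dv ⬝ᵥ dv) ≤ (1 / (2 * σ)) * (dv ⬝ᵥ dv) := by
    apply mul_le_mul_of_nonneg_right _ hdd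
    rw [div_le_div_iff₀ (by linarith) (by linarith)]
    linarith
  linarith


/-- disturbance bound on the scaled Hamiltonian H_Δ for the APAV string. -/
theorem stmt_15 (N : ℕ) (hN : 1 ≤ N) (hd hp : ℝ) (hhd0 : 0 ≤ hd) (hhd1 : hd < 1)
    (hhp : 0 ≤ hp) (v0 : ℝ)
    (r a m : Fin N → ℝ) (hr : ∀ i, 0 < r i) (ha : ∀ i, 0 < a i) (hm : ∀ i, 0 < m i)
    (σ : ℝ) (hσ : 0 < σ)
    (hσmin : ∀ v : Fin N → ℝ,
      σ * (v ⬝ᵥ v) ≤ v ⬝ᵥ ((Matrix.diagonal (fun i : Fin N => ((1 - hd) / (1 + hd)) ^ (i : ℕ)) *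
        ((Bmat N + hp • absB N) * Matrix.diagonal r * (Bmat N)ᵀ)) *ᵥ v))
    (d : ℝ → Fin N → ℝ) (hdmeas : Measurable d)
    (hdint : MeasureTheory.IntegrableOn (fun s => d s ⬝ᵥ d s) (Set.Ioi (0 : ℝ)))
    (p Δ : ℝ → Fin N → ℝ)
    (hdyn : ∀ t : ℝ, 0 ≤ t →
      HasDerivAt p
        (-(((Bmat N + hp • absB N) * Matrix.diagonal r * (Bmat N)ᵀ) *ᵥ
            (Matrix.diagonal (fun i => (m i)⁻¹) *ᵥ p t - v0 • (fun _ : Fin N => (1:ℝ))))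
          + ((Bmat N + hd • absB N) * Matrix.diagonal a) *ᵥ Δ t + d t) t ∧
      HasDerivAt Δ
        (-((Bmat N)ᵀ *ᵥ (Matrix.diagonal (fun i => (m i)⁻¹) *ᵥ p t - v0 • (fun _ : Fin N => (1:ℝ))))) t)
    (t : ℝ) (ht : 0 ≤ t) :
    HamD hd v0 m a (p t) (Δ t) ≤ HamD hd v0 m a (p 0) (Δ 0) +
      (1 / (2 * σ)) * ∫ s in Set.Ioi (0 : ℝ), d s ⬝ᵥ d s := by
  
  set φ : ℝ → ℝ := fun s => HamD hd v0 m a (p s) (Δ s) with hφ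
  set g' : ℝ → ℝ := fun s =>
    (p s - v0 • (Matrix.diagonal m *ᵥ fun _ => 1)) ⬝ᵥ
      ((Matrix.diagonal (fun i : Fin N => ((1 - hd) / (1 + hd)) ^ (i : ℕ)) *
        Matrix.diagonal (fun i => (m i)⁻¹)) *ᵥ
        (-(((Bmat N + hp • absB N) * Matrix.diagonal r * (Bmat N)ᵀ) *ᵥ
            (Matrix.diagonal (fun i => (m i)⁻¹) *ᵥ p s - v0 • (fun _ : Fin N => (1:ℝ))))
          + ((Bmat N + hd • absB N) * Matrix.diagonal a) *ᵥ Δ s + d s))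
    + (1 + hd) * (Δ s ⬝ᵥ ((Matrix.diagonal (fun i : Fin N => ((1 - hd) / (1 + hd)) ^ (i : ℕ)) *
        Matrix.diagonal a) *ᵥ
        (-((Bmat N)ᵀ *ᵥ (Matrix.diagonal (fun i => (m i)⁻¹) *ᵥ p s
            - v0 • (fun _ : Fin N => (1:ℝ))))))) with hg'
  have hderiv : ∀ s : ℝ, 0 ≤ s → HasDerivAt φ (g' s) s := fun s hs =>
    hasDerivAt_HamD hd v0 m a (hdyn s hs).1 (hdyn s hs).2
  have hbound : ∀ s : ℝ, 0 ≤ s → g' s ≤ (1 / (2 * σ)) * (d s ⬝ᵥ d s) := fun s _ =>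
    key_bound hd hp hhd0 hhd1 v0 σ hσ r a m hm hσmin (p s) (Δ s) (d s)
  have hcont : ContinuousOn φ (Set.Icc 0 t) := fun x hx =>
    ((hderiv x hx.1).continuousAt).continuousWithinAt
  have hφint : IntegrableOn (fun s => (1 / (2 * σ)) * (d s ⬝ᵥ d s)) (Set.Icc 0 t) := by
    rw [integrableOn_Icc_iff_integrableOn_Ioc]
    exact (hdint.mono_set Set.Ioc_subset_Ioi_self).const_mul _
  have key := intervalIntegral.sub_le_integral_of_hasDeriv_right_of_le ht hcont
    (fun x hx => (hderiv x hx.1.le).hasDerivWithinAt) hφint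
    (fun x hx => hbound x hx.1.le)
  have hIoc : (∫ y in (0:ℝ)..t, (1 / (2 * σ)) * (d y ⬝ᵥ d y))
      = (1 / (2 * σ)) * ∫ y in Set.Ioc (0:ℝ) t, (d y ⬝ᵥ d y) := by
    rw [intervalIntegral.integral_of_le ht, MeasureTheory.integral_const_mul]
  have hnn : 0 ≤ᵐ[MeasureTheory.volume.restrict (Set.Ioi (0:ℝ))] fun s => d s ⬝ᵥ d s :=
    Filter.Eventually.of_forall fun s => Finset.sum_nonneg fun i _ => mul_self_nonneg _
  have hmono : (∫ y in Set.Ioc (0:ℝ) t, (d y ⬝ᵥ d y)) ≤ ∫ s in Set.Ioi (0:ℝ), d s ⬝ᵥ d s :=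
    setIntegral_mono_set hdint hnn (HasSubset.Subset.eventuallyLE Set.Ioc_subset_Ioi_self)
  have hcpos : (0:ℝ) ≤ 1 / (2 * σ) := by positivity
  have := mul_le_mul_of_nonneg_left hmono hcpos
  rw [hIoc] at key
  linarith
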